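/- Let ac be an arithmetic condition in k variables and let π_g : ℕ → ℕ be the greedy injection avoiding the max-restricted condition (π_g(0) = 0, and π_g(n) is the least value distinct from all earlier values such that whenever x_1, ..., x_{k−1} < n satisfy ac together with n, and π_g(x_i) < π_g(n) for all i, the images do not satisfy ac). Then π_g is an involution: π_g(π_g(n)) = n for all n. -/
import Mathlib


/-- `m` is an admissible value for `π` at step `n` (max-restricted avoidance of the
arithmetic condition `ac` in `k` variables): `m` differs from all earlier values, and
whenever a tuple with `n` in one slot and all other entries `< n` satisfies `ac` and
all other image values are `< m`, the image tuple (with `m` in `n`'s slot) does not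
satisfy `ac`. -/
def Admiss (k : ℕ) (ac : (Fin k → ℕ) → Prop) (π : ℕ → ℕ) (n m : ℕ) : Prop :=
  (∀ j, j < n → π j ≠ m) ∧
  ∀ (v : Fin k → ℕ) (j : Fin k), v j = n → (∀ i, i ≠ j → v i < n) →
    ac v → (∀ i, i ≠ j → π (v i) < m) →
      ¬ ac (fun i => if i = j then m else π (v i))

/-- The greedy injection avoiding the max-restricted arithmetic condition `ac`
(`π 0 = 0`, and `π n` is the least admissible value at each step `n > 0`) is an
involution. -/
theorem greedy_maxac_involution (k : ℕ) (ac : (Fin k → ℕ) → Prop) (π : ℕ → ℕ)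
    (h0 : π 0 = 0)
    (hgreedy : ∀ n, 0 < n →
      Admiss k ac π n (π n) ∧ ∀ m, m < π n → ¬ Admiss k ac π n m) :
    ∀ n, π (π n) = n := by
  have hne : ∀ a b : ℕ, a < b → π a ≠ π b := fun a b hab =>
    (hgreedy b (by omega)).1.1 a hab
  have inj : ∀ a b : ℕ, π a = π b → a = b := by
    intro a b hab
    rcases lt_trichotomy a b with h | h | h
    · exact absurd hab (hne a b h)
    · exact h
    · exact absurd hab.symm (hne b a h)
  intro n
  induction n using Nat.strong_induction_on with
  | _ n IH =>
    rcases lt_trichotomy (π n) n with h | h | h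
    · exact inj _ _ (IH (π n) h)
    · rw [h, h]
    · have hn : 0 < n := by
        rcases Nat.eq_zero_or_pos n with rfl | hn
        · rw [h0] at h; omega
        · exact hn
      have hm0 : 0 < π n := by omega
      have hBlt : ¬ π (π n) < n := by
        intro ht
        have h4 := inj _ _ (inj _ _ (IH _ ht))
        omega
      have hadm : Admiss k ac π (π n) n := by
        constructor
        · intro j hj hje
          rcases lt_trichotomy j n with hj1 | rfl | hj1
          · have hh := IH j hj1
            rw [hje] at hh
            omega
          · omega
          · have hj0 : 0 < j := by omega
            have hja := (hgreedy n hn).2 j hj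
            rw [Admiss] at hja
            rcases not_and_or.mp hja with h1 | h2
            · push_neg at h1
              obtain ⟨i, hi, hpi⟩ := h1
              have hh := IH i hi
              rw [hpi, hje] at hh
              omega
            · push_neg at h2
              obtain ⟨v, j0, hv1, hv2, hacv, hv3, hacu⟩ := h2
              have key := (hgreedy j hj0).1.2
                (fun i => if i = j0 then j else π (v i)) j0 (by simp)
                (fun i hi => by simp only [if_neg hi]; exact hv3 i hi)
                hacu
                (fun i hi => by
                  simp only [if_neg hi]
                  rw [IH (v i) (hv2 i hi), hje]
                  exact hv2 i hi)
              apply key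
              convert hacv using 1
              funext i
              by_cases hij : i = j0
              · subst hij
                simp [hje, hv1]
              · simp only [if_neg hij]
                exact IH (v i) (hv2 i hij)
        · intro w j1 hw1 hw2 hacw hw3 hacv
          have key := (hgreedy n hn).1.2
            (fun i => if i = j1 then n else π (w i)) j1 (by simp)
            (fun i hi => by simp only [if_neg hi]; exact hw3 i hi)
            hacv
            (fun i hi => by
              simp only [if_neg hi]
              have hx : π (π (w i)) = w i := inj _ _ (IH (π (w i)) (hw3 i hi))
              rw [hx]
              exact hw2 i hi)
          apply key
          convert hacw using 1
          funext i
          by_cases hij : i = j1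
          · subst hij
            simp [hw1]
          · simp only [if_neg hij]
            exact inj _ _ (IH (π (w i)) (hw3 i hij))
      have hle : ¬ n < π (π n) := fun hlt => (hgreedy (π n) hm0).2 n hlt hadm
      omega
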